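/- arXiv:2604.25055 — 2 statements merged into one kernel-verified Lean document; each statement's English description precedes it below -/
import Mathlib

section
/- Let G be a König–Egerváry graph. Then prk(G) = 2μ(G), where prk(G) denotes the maximum order of a subgraph of G each of whose connected components is either a single edge or a cycle, and μ(G) is the matching number of G. -/
/-! ## Basic matching terminology -/

/-- `M` is a matching of the simple graph `G`: a set of edges of `G` that are pairwise
non-adjacent, i.e. no two distinct edges of `M` share a vertex. -/
def IsMatching {V : Type} (G : SimpleGraph V) (M : Finset (Sym2 V)) : Prop :=
  (∀ e ∈ M, e ∈ G.edgeSet) ∧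
  ∀ e ∈ M, ∀ f ∈ M, e ≠ f → ∀ v : V, ¬(v ∈ e ∧ v ∈ f)

/-- A vertex `v` is saturated by the edge set `M` if it is an endpoint of some edge of `M`. -/
def Saturates {V : Type} (M : Finset (Sym2 V)) (v : V) : Prop := ∃ e ∈ M, v ∈ e

/-- `M` is a perfect matching of `G`: a matching saturating every vertex of `G`. -/
def IsPerfectMatching {V : Type} (G : SimpleGraph V) (M : Finset (Sym2 V)) : Prop :=
  IsMatching G M ∧ ∀ v : V, Saturates M v

/-- The matching number `μ(G)`: the maximum cardinality of a matching of `G`. -/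
noncomputable def matchNum {V : Type} (G : SimpleGraph V) : ℕ :=
  sSup {n | ∃ M : Finset (Sym2 V), IsMatching G M ∧ M.card = n}

/-- The independence number `α(G)`: the maximum cardinality of a set of pairwise
non-adjacent vertices. -/
noncomputable def indepNum {V : Type} (G : SimpleGraph V) : ℕ :=
  sSup {n | ∃ S : Finset V, (∀ u ∈ S, ∀ v ∈ S, ¬ G.Adj u v) ∧ S.card = n}

/-- `G` is a König–Egerváry graph if `α(G) + μ(G) = |V(G)|`. -/
def IsKonigEgervary {V : Type} [Fintype V] (G : SimpleGraph V) : Prop :=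
  indepNum G + matchNum G = Fintype.card V

/-! ## Degrees and graphs whose components are single edges or cycles -/

/-- The degree of `v` in `H`, as the cardinality of its neighbour set. -/
noncomputable def ndeg {V : Type} (H : SimpleGraph V) (v : V) : ℕ := (H.neighborSet v).ncard

/-- Every connected component of (the finite simple graph) `H` is a single edge (a copy of
`K₂`) or a cycle: every vertex has degree `1` or `2`, and the degree is constant on each
connected component (a finite connected `1`-regular graph is `K₂`, and a finite connected
`2`-regular graph is a cycle). -/
def ComponentsAreEdgesOrCycles {V : Type} (H : SimpleGraph V) : Prop :=
  (∀ v : V, ndeg H v = 1 ∨ ndeg H v = 2) ∧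
  ∀ ⦃u v : V⦄, H.Adj u v → ndeg H u = ndeg H v

/-- `H` is a Sachs subgraph of `G`: a spanning subgraph each of whose connected components
is a single edge or a cycle. -/
def IsSachsSubgraph {V : Type} (G H : SimpleGraph V) : Prop :=
  H ≤ G ∧ ComponentsAreEdgesOrCycles H

/-- `H` has a connected component which is an odd cycle: a component all of whose vertices
have degree `2` (hence a cycle) with an odd number of vertices. -/
def HasOddCycleComponent {V : Type} (H : SimpleGraph V) : Prop :=
  ∃ c : H.ConnectedComponent, (∀ v ∈ c.supp, ndeg H v = 2) ∧ Odd c.supp.ncard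

/-- Degree of a vertex in a subgraph. -/
noncomputable def subNdeg {V : Type} {G : SimpleGraph V} (H : G.Subgraph) (v : V) : ℕ :=
  (H.neighborSet v).ncard

/-- Every connected component of the subgraph `H` of `G` is a single edge or a cycle. -/
def SubComponentsAreEdgesOrCycles {V : Type} {G : SimpleGraph V} (H : G.Subgraph) : Prop :=
  (∀ v ∈ H.verts, subNdeg H v = 1 ∨ subNdeg H v = 2) ∧
  ∀ ⦃u v : V⦄, H.Adj u v → subNdeg H u = subNdeg H v

/-- The subgraph `H` of `G` has a connected component which is an odd cycle. -/
def SubHasOddCycleComponent {V : Type} {G : SimpleGraph V} (H : G.Subgraph) : Prop :=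
  ∃ c : H.coe.ConnectedComponent,
    (∀ v ∈ c.supp, subNdeg H ↑v = 2) ∧ Odd c.supp.ncard

/-- `prk G`: the maximum order of a subgraph of `G` each of whose connected components is a
single edge or a cycle (`0` for an edgeless graph). -/
noncomputable def prk {V : Type} (G : SimpleGraph V) : ℕ :=
  sSup {n | ∃ H : G.Subgraph, SubComponentsAreEdgesOrCycles H ∧ H.verts.ncard = n}

/-- `X` is a vertex cover of `H`: every edge of `H` has an endpoint in `X`. -/
def IsVertexCover {V : Type} (H : SimpleGraph V) (X : Set V) : Prop :=
  ∀ ⦃u v : V⦄, H.Adj u v → u ∈ X ∨ v ∈ X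

/-! ## Symmetric differences of matchings -/

/-- The graph on `V` whose edges are the symmetric difference `M₁ △ M₂`. -/
def symmDiffGraph {V : Type} [DecidableEq V] (M₁ M₂ : Finset (Sym2 V)) : SimpleGraph V :=
  SimpleGraph.fromEdgeSet ↑(symmDiff M₁ M₂)

/-- On the vertex set `S`, consecutive edges of `H` alternate between `M₁` and `M₂`. -/
def AltOn {V : Type} (H : SimpleGraph V) (M₁ M₂ : Finset (Sym2 V)) (S : Set V) : Prop :=
  ∀ ⦃u v w : V⦄, v ∈ S → H.Adj u v → H.Adj v w → u ≠ w →
    (s(u, v) ∈ M₁ ∧ s(v, w) ∈ M₂) ∨ (s(u, v) ∈ M₂ ∧ s(v, w) ∈ M₁)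

/-! ## Perfect flowers -/

/-- `(C, P)` is an `M`-perfect flower: `C` is an odd cycle of length `2k+1` containing
exactly `k` edges of `M`, and `P` is a nontrivial `M`-alternating path whose first and last
edges belong to `M`, such that `V(C) ∩ V(P)` consists exactly of the common endpoint `a`. -/
structure IsPerfectFlower {V : Type} [DecidableEq V] (G : SimpleGraph V)
    (M : Finset (Sym2 V)) {a b : V} (C : G.Walk a a) (P : G.Walk a b) : Prop where
  cycle : C.IsCycle
  odd : Odd C.length
  blossom : C.edges.countP (fun e => e ∈ M) = C.length / 2
  path : P.IsPath
  nontrivial : 0 < P.length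
  alternating : List.Chain' (fun e f => e ∈ M ↔ f ∉ M) P.edges
  firstEdge : ∀ e ∈ P.edges.head?, e ∈ M
  lastEdge : ∀ e ∈ P.edges.getLast?, e ∈ M
  meet : ∀ v : V, (v ∈ C.support ∧ v ∈ P.support) ↔ v = a

/-- The perfect-flower part `PF(G)`: vertices belonging to some `M`-perfect flower, for some
maximum matching `M` of `G`. -/
def PF {V : Type} [DecidableEq V] (G : SimpleGraph V) : Set V :=
  {x | ∃ M : Finset (Sym2 V), IsMatching G M ∧ M.card = matchNum G ∧
    ∃ (a b : V) (C : G.Walk a a) (P : G.Walk a b),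
      IsPerfectFlower G M C P ∧ (x ∈ C.support ∨ x ∈ P.support)}

/-- The perfect-flower-free part `PFF(G) = V(G) \ PF(G)`. -/
def PFF {V : Type} [DecidableEq V] (G : SimpleGraph V) : Set V := (PF G)ᶜ

/-! ## Determinant and permanent of a graph -/

/-- The determinant of the adjacency matrix of `G` over `ℤ`. -/
noncomputable def detG {V : Type} [Fintype V] [DecidableEq V] (G : SimpleGraph V) : ℤ :=
  letI := Classical.decRel G.Adj
  (SimpleGraph.adjMatrix ℤ G).det

/-- The permanent of the adjacency matrix of `G` over `ℤ`. -/
noncomputable def permG {V : Type} [Fintype V] [DecidableEq V] (G : SimpleGraph V) : ℤ :=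
  letI := Classical.decRel G.Adj
  (SimpleGraph.adjMatrix ℤ G).permanent

/-- `det(G[X])`, the determinant of the adjacency matrix of the induced subgraph `G[X]`
(equal to `1` when `X = ∅`, the determinant of the empty matrix). -/
noncomputable def detInd {V : Type} [Fintype V] [DecidableEq V]
    (G : SimpleGraph V) (X : Set V) : ℤ :=
  letI : Fintype ↥X := X.toFinite.fintype
  detG (G.induce X)

/-- `perm(G[X])`, the permanent of the adjacency matrix of the induced subgraph `G[X]`
(equal to `1` when `X = ∅`). -/
noncomputable def permInd {V : Type} [Fintype V] [DecidableEq V]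
    (G : SimpleGraph V) (X : Set V) : ℤ :=
  letI : Fintype ↥X := X.toFinite.fintype
  permG (G.induce X)

/-! ## Auxiliary constructions -/

/-- The subgraph of `G` spanned by the edges of a matching `M`: its vertices are the
endpoints of edges of `M` and its edges are exactly the edges of `M`. -/
def matchingSubgraph {V : Type} (G : SimpleGraph V) (M : Finset (Sym2 V))
    (hM : ∀ e ∈ M, e ∈ G.edgeSet) : G.Subgraph where
  verts := {v | ∃ e ∈ M, v ∈ e}
  Adj u v := s(u, v) ∈ M
  adj_sub h := G.mem_edgeSet.mp (hM _ h)
  edge_vert h := ⟨_, h, Sym2.mem_mk_left _ _⟩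
  symm := ⟨fun u v (h : s(u, v) ∈ M) => show s(v, u) ∈ M by rwa [Sym2.eq_swap]⟩

/-- The restriction of an edge set `M` to the edges with both endpoints in `X`. -/
noncomputable def restrictEdges {V : Type} (M : Finset (Sym2 V)) (X : Set V) :
    Finset (Sym2 V) :=
  letI := Classical.decPred fun e : Sym2 V => ∀ v ∈ e, v ∈ X
  M.filter fun e => ∀ v ∈ e, v ∈ X

/-- `M` is a perfect matching of the induced subgraph `G[X]`: a matching of `G` whose edges
have both endpoints in `X`, saturating every vertex of `X`. -/
def IsPerfectMatchingOn {V : Type} (G : SimpleGraph V) (X : Set V)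
    (M : Finset (Sym2 V)) : Prop :=
  (∀ e ∈ M, e ∈ G.edgeSet ∧ ∀ v ∈ e, v ∈ X) ∧
  (∀ e ∈ M, ∀ f ∈ M, e ≠ f → ∀ v : V, ¬(v ∈ e ∧ v ∈ f)) ∧
  ∀ v ∈ X, ∃ e ∈ M, v ∈ e

/-! ## Auxiliary lemmas for Statement 5 -/

lemma exists_max_matching {V : Type} [Fintype V] (G : SimpleGraph V) :
    ∃ M : Finset (Sym2 V), IsMatching G M ∧ M.card = matchNum G := by
  classical
  have hne : ({n | ∃ M : Finset (Sym2 V), IsMatching G M ∧ M.card = n}).Nonempty :=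
    ⟨0, ∅, ⟨by simp, by simp⟩, by simp⟩
  have hbdd : BddAbove {n | ∃ M : Finset (Sym2 V), IsMatching G M ∧ M.card = n} := by
    refine ⟨Fintype.card (Sym2 V), ?_⟩
    rintro n ⟨M, _, rfl⟩
    exact Finset.card_le_univ M
  have := Nat.sSup_mem hne hbdd
  obtain ⟨M, hM, hcard⟩ := this
  exact ⟨M, hM, hcard⟩

lemma exists_max_indep {V : Type} [Fintype V] (G : SimpleGraph V) :
    ∃ S : Finset V, (∀ u ∈ S, ∀ v ∈ S, ¬ G.Adj u v) ∧ S.card = indepNum G := by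
  classical
  have hne : ({n | ∃ S : Finset V, (∀ u ∈ S, ∀ v ∈ S, ¬ G.Adj u v) ∧ S.card = n}).Nonempty :=
    ⟨0, ∅, by simp, by simp⟩
  have hbdd : BddAbove {n | ∃ S : Finset V, (∀ u ∈ S, ∀ v ∈ S, ¬ G.Adj u v) ∧ S.card = n} := by
    refine ⟨Fintype.card V, ?_⟩
    rintro n ⟨S, _, rfl⟩
    exact Finset.card_le_univ S
  obtain ⟨S, hS, hcard⟩ := Nat.sSup_mem hne hbdd
  exact ⟨S, hS, hcard⟩

/-- Double counting swap. -/
lemma sum_filter_adj_comm {V : Type} [DecidableEq V] (s t : Finset V) (r : V → V → Prop)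
    [DecidableRel r] :
    ∑ v ∈ s, (t.filter (fun w => r v w)).card = ∑ w ∈ t, (s.filter (fun v => r v w)).card := by
  simp_rw [Finset.card_filter]
  exact Finset.sum_comm

/-- Key counting lemma: a subgraph all of whose components are edges or cycles has at
most twice as many vertices as any vertex cover of the ambient graph. -/
lemma verts_le_two_mul_cover {V : Type} [Fintype V] {G : SimpleGraph V} (H : G.Subgraph)
    (hdeg : ∀ v ∈ H.verts, subNdeg H v = 1 ∨ subNdeg H v = 2)
    (hconst : ∀ ⦃u v : V⦄, H.Adj u v → subNdeg H u = subNdeg H v)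
    (X : Finset V) (hX : ∀ ⦃u v : V⦄, G.Adj u v → u ∈ X ∨ v ∈ X) :
    H.verts.ncard ≤ 2 * X.card := by
  classical
  set T : Finset V := (Set.toFinite H.verts).toFinset with hTdef
  have hT : ∀ v, v ∈ T ↔ v ∈ H.verts := fun v => Set.Finite.mem_toFinset _
  set N : V → Finset V := fun v => (Set.toFinite (H.neighborSet v)).toFinset with hNdef
  have hN : ∀ v w, w ∈ N v ↔ H.Adj v w := fun v w => Set.Finite.mem_toFinset _
  have hNcard : ∀ v, (N v).card = subNdeg H v := fun v =>
    (Set.ncard_eq_toFinset_card _ _).symm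
  set A : ℕ → Finset V := fun i => T.filter (fun v => v ∉ X ∧ subNdeg H v = i) with hAdef
  set B : ℕ → Finset V := fun i => T.filter (fun v => v ∈ X ∧ subNdeg H v = i) with hBdef
  have key : ∀ i, (A i).card * i ≤ (B i).card * i := by
    intro i
    have step1 : ∀ v ∈ A i, ((B i).filter (fun w => H.Adj v w)).card = i := by
      intro v hv
      rw [hAdef] at hv
      obtain ⟨hvT, hvX, hvdeg⟩ := Finset.mem_filter.mp hv
      have hNsub : N v ⊆ B i := by
        intro w hw
        have hadj : H.Adj v w := (hN v w).mp hw
        have hwT : w ∈ T := (hT w).mpr (H.edge_vert hadj.symm)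
        have hwX : w ∈ X := (hX (H.adj_sub hadj)).resolve_left hvX
        have hwdeg : subNdeg H w = i := (hconst hadj).symm.trans hvdeg
        rw [hBdef]
        exact Finset.mem_filter.mpr ⟨hwT, hwX, hwdeg⟩
      have heq : (B i).filter (fun w => H.Adj v w) = N v := by
        ext w
        simp only [Finset.mem_filter]
        constructor
        · rintro ⟨_, h⟩; exact (hN v w).mpr h
        · intro h; exact ⟨hNsub h, (hN v w).mp h⟩
      rw [heq, hNcard v, hvdeg]
    have step2 : ∀ w ∈ B i, ((A i).filter (fun v => H.Adj v w)).card ≤ i := by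
      intro w hw
      rw [hBdef] at hw
      obtain ⟨hwT, hwX, hwdeg⟩ := Finset.mem_filter.mp hw
      have hsub : (A i).filter (fun v => H.Adj v w) ⊆ N w := by
        intro v hv
        exact (hN w v).mpr ((Finset.mem_filter.mp hv).2).symm
      calc ((A i).filter (fun v => H.Adj v w)).card ≤ (N w).card := Finset.card_le_card hsub
        _ = i := by rw [hNcard w, hwdeg]
    calc (A i).card * i = ∑ _v ∈ A i, i := by rw [Finset.sum_const, smul_eq_mul]
      _ = ∑ v ∈ A i, ((B i).filter (fun w => H.Adj v w)).card :=
          (Finset.sum_congr rfl step1).symm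
      _ = ∑ w ∈ B i, ((A i).filter (fun v => H.Adj v w)).card :=
          sum_filter_adj_comm _ _ _
      _ ≤ ∑ _w ∈ B i, i := Finset.sum_le_sum step2
      _ = (B i).card * i := by rw [Finset.sum_const, smul_eq_mul]
  have key1 : (A 1).card ≤ (B 1).card := by
    have := key 1; omega
  have key2 : (A 2).card ≤ (B 2).card := by
    have := key 2
    exact Nat.le_of_mul_le_mul_right this (by norm_num)
  have hApart : T.filter (fun v => v ∉ X) = A 1 ∪ A 2 := by
    ext v
    rw [hAdef]
    simp only [Finset.mem_filter, Finset.mem_union]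
    constructor
    · rintro ⟨hvT, hvX⟩
      rcases hdeg v ((hT v).mp hvT) with h | h
      · exact Or.inl ⟨hvT, hvX, h⟩
      · exact Or.inr ⟨hvT, hvX, h⟩
    · rintro (⟨h1, h2, _⟩ | ⟨h1, h2, _⟩) <;> exact ⟨h1, h2⟩
  have hBpart : T.filter (fun v => v ∈ X) = B 1 ∪ B 2 := by
    ext v
    rw [hBdef]
    simp only [Finset.mem_filter, Finset.mem_union]
    constructor
    · rintro ⟨hvT, hvX⟩
      rcases hdeg v ((hT v).mp hvT) with h | h
      · exact Or.inl ⟨hvT, hvX, h⟩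
      · exact Or.inr ⟨hvT, hvX, h⟩
    · rintro (⟨h1, h2, _⟩ | ⟨h1, h2, _⟩) <;> exact ⟨h1, h2⟩
  have hdisjA : Disjoint (A 1) (A 2) := by
    rw [Finset.disjoint_left]
    intro v h1 h2
    rw [hAdef] at h1 h2
    have := (Finset.mem_filter.mp h1).2.2
    have := (Finset.mem_filter.mp h2).2.2
    omega
  have hdisjB : Disjoint (B 1) (B 2) := by
    rw [Finset.disjoint_left]
    intro v h1 h2
    rw [hBdef] at h1 h2
    have := (Finset.mem_filter.mp h1).2.2
    have := (Finset.mem_filter.mp h2).2.2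
    omega
  have hTcard : (T.filter (fun v => v ∈ X)).card + (T.filter (fun v => v ∉ X)).card
      = T.card := Finset.card_filter_add_card_filter_not _
  have hBX : T.filter (fun v => v ∈ X) ⊆ X := fun v hv => (Finset.mem_filter.mp hv).2
  have hBXcard : (T.filter (fun v => v ∈ X)).card ≤ X.card := Finset.card_le_card hBX
  have hAcard : (T.filter (fun v => v ∉ X)).card = (A 1).card + (A 2).card := by
    rw [hApart, Finset.card_union_of_disjoint hdisjA]
  have hBcard : (T.filter (fun v => v ∈ X)).card = (B 1).card + (B 2).card := by
    rw [hBpart, Finset.card_union_of_disjoint hdisjB]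
  have hfin : H.verts.ncard = T.card := Set.ncard_eq_toFinset_card _ _
  omega

/-- The vertex support of a matching has exactly twice as many vertices as edges. -/
lemma ncard_matching_supp {V : Type} [Fintype V] (M : Finset (Sym2 V))
    (hd : ∀ e ∈ M, ¬ e.IsDiag)
    (hm : ∀ e ∈ M, ∀ f ∈ M, e ≠ f → ∀ v : V, ¬(v ∈ e ∧ v ∈ f)) :
    {v : V | ∃ e ∈ M, v ∈ e}.ncard = 2 * M.card := by
  classical
  induction M using Finset.induction_on with
  | empty => simp
  | @insert e S he ih =>
    have hd' : ∀ f ∈ S, ¬ f.IsDiag := fun f hf => hd f (Finset.mem_insert_of_mem hf)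
    have hm' : ∀ f ∈ S, ∀ g ∈ S, f ≠ g → ∀ v : V, ¬(v ∈ f ∧ v ∈ g) := fun f hf g hg =>
      hm f (Finset.mem_insert_of_mem hf) g (Finset.mem_insert_of_mem hg)
    have hsplit : {v : V | ∃ f ∈ insert e S, v ∈ f}
        = {v : V | v ∈ e} ∪ {v : V | ∃ f ∈ S, v ∈ f} := by
      ext v
      simp only [Set.mem_setOf_eq, Set.mem_union, Finset.mem_insert]
      constructor
      · rintro ⟨f, (rfl | hf), hv⟩
        · exact Or.inl hv
        · exact Or.inr ⟨f, hf, hv⟩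
      · rintro (hv | ⟨f, hf, hv⟩)
        · exact ⟨e, Or.inl rfl, hv⟩
        · exact ⟨f, Or.inr hf, hv⟩
    have hdisj : Disjoint {v : V | v ∈ e} {v : V | ∃ f ∈ S, v ∈ f} := by
      rw [Set.disjoint_left]
      rintro v hv ⟨f, hf, hvf⟩
      have hef : e ≠ f := fun h => he (h ▸ hf)
      exact hm e (Finset.mem_insert_self e S) f (Finset.mem_insert_of_mem hf) hef v ⟨hv, hvf⟩
    have hecard : {v : V | v ∈ e}.ncard = 2 := by
      induction e using Sym2.ind with
      | _ a b =>
        have hab : a ≠ b := by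
          intro h
          exact hd s(a, b) (Finset.mem_insert_self _ _) (by simp [h])
        have : {v : V | v ∈ s(a, b)} = {a, b} := by
          ext v; simp [Sym2.mem_iff]
        rw [this, Set.ncard_pair hab]
    rw [hsplit, Set.ncard_union_eq hdisj (Set.toFinite _) (Set.toFinite _), hecard,
      ih hd' hm', Finset.card_insert_of_notMem he]
    ring

lemma matchingSubgraph_components {V : Type} (G : SimpleGraph V) (M : Finset (Sym2 V))
    (hM : IsMatching G M) :
    SubComponentsAreEdgesOrCycles (matchingSubgraph G M hM.1) := by
  have hdeg : ∀ v ∈ (matchingSubgraph G M hM.1).verts,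
      subNdeg (matchingSubgraph G M hM.1) v = 1 := by
    intro v hv
    obtain ⟨e, he, hve⟩ := hv
    obtain ⟨w, rfl⟩ := Sym2.mem_iff_exists.mp hve
    have hset : (matchingSubgraph G M hM.1).neighborSet v = {w} := by
      ext w'
      simp only [SimpleGraph.Subgraph.mem_neighborSet, Set.mem_singleton_iff]
      constructor
      · intro h
        have h' : s(v, w') ∈ M := h
        by_contra hne
        have hedne : s(v, w) ≠ s(v, w') := by
          intro heq
          rcases Sym2.eq_iff.mp heq with ⟨_, h2⟩ | ⟨h1, h2⟩
          · exact hne h2.symm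
          · exact hne (h1.symm.trans h2.symm)
        exact hM.2 s(v, w) he s(v, w') h' hedne v
          ⟨Sym2.mem_mk_left _ _, Sym2.mem_mk_left _ _⟩
      · rintro rfl
        exact he
    unfold subNdeg
    rw [hset, Set.ncard_singleton]
  constructor
  · intro v hv
    exact Or.inl (hdeg v hv)
  · intro u v h
    have hu : u ∈ (matchingSubgraph G M hM.1).verts := (matchingSubgraph G M hM.1).edge_vert h
    have hv : v ∈ (matchingSubgraph G M hM.1).verts :=
      (matchingSubgraph G M hM.1).edge_vert ((matchingSubgraph G M hM.1).adj_symm h)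
    rw [hdeg u hu, hdeg v hv]

/-- For every König–Egerváry graph `G`: `prk(G) = 2μ(G)`. -/
theorem stmt5 {V : Type} [Fintype V] (G : SimpleGraph V) (hG : IsKonigEgervary G) :
    prk G = 2 * matchNum G := by
  classical
  obtain ⟨M, hM, hMcard⟩ := exists_max_matching G
  obtain ⟨S, hS, hScard⟩ := exists_max_indep G
  set X : Finset V := Sᶜ with hXdef
  have hcov : ∀ ⦃u v : V⦄, G.Adj u v → u ∈ X ∨ v ∈ X := by
    intro u v huv
    by_contra h
    push_neg at h
    obtain ⟨hu, hv⟩ := h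
    rw [hXdef, Finset.mem_compl, not_not] at hu hv
    exact hS u hu v hv huv
  have hSle : S.card ≤ Fintype.card V := Finset.card_le_univ S
  have hXcard : X.card = matchNum G := by
    rw [hXdef, Finset.card_compl]
    have : indepNum G + matchNum G = Fintype.card V := hG
    omega
  -- upper bound for every element of the prk set
  have key : ∀ n ∈ {n | ∃ H : G.Subgraph, SubComponentsAreEdgesOrCycles H ∧
      H.verts.ncard = n}, n ≤ 2 * matchNum G := by
    rintro n ⟨H, ⟨hdeg, hconst⟩, rfl⟩
    calc H.verts.ncard ≤ 2 * X.card := verts_le_two_mul_cover H hdeg hconst X hcov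
      _ = 2 * matchNum G := by rw [hXcard]
  -- membership of 2 * matchNum G
  have hmem : 2 * matchNum G ∈ {n | ∃ H : G.Subgraph, SubComponentsAreEdgesOrCycles H ∧
      H.verts.ncard = n} := by
    refine ⟨matchingSubgraph G M hM.1, matchingSubgraph_components G M hM, ?_⟩
    have hd : ∀ e ∈ M, ¬ e.IsDiag := fun e he =>
      (SimpleGraph.not_isDiag_of_mem_edgeSet G (hM.1 e he))
    have : (matchingSubgraph G M hM.1).verts = {v : V | ∃ e ∈ M, v ∈ e} := rfl
    rw [this, ncard_matching_supp M hd hM.2, hMcard]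
  refine le_antisymm (csSup_le ⟨_, hmem⟩ key) (le_csSup ⟨2 * matchNum G, key⟩ hmem)
end

section
/- Let G be a König–Egerváry graph. Then G has a perfect matching if and only if every subgraph H of G of maximum order among subgraphs whose connected components are all single edges or cycles is a spanning subgraph of G (equivalently, prk(G) = |V(G)|). -/
/-! ### helper lemmas -/

section MyHelpers

variable {V : Type}

lemma my_isMatching_empty (G : SimpleGraph V) : IsMatching G ∅ :=
  ⟨fun e he => absurd he (Finset.notMem_empty e),
   fun e he => absurd he (Finset.notMem_empty e)⟩

lemma my_matchNum_bdd [Fintype V] (G : SimpleGraph V) :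
    BddAbove {n | ∃ M : Finset (Sym2 V), IsMatching G M ∧ M.card = n} := by
  classical
  exact ⟨Fintype.card (Sym2 V), by rintro n ⟨M, -, rfl⟩; exact M.card_le_univ⟩

lemma my_exists_max_matching [Fintype V] (G : SimpleGraph V) :
    ∃ M : Finset (Sym2 V), IsMatching G M ∧ M.card = matchNum G := by
  have hne : {n | ∃ M : Finset (Sym2 V), IsMatching G M ∧ M.card = n}.Nonempty :=
    ⟨0, ∅, my_isMatching_empty G, Finset.card_empty⟩
  exact Nat.sSup_mem hne (my_matchNum_bdd G)

lemma my_card_le_matchNum [Fintype V] {G : SimpleGraph V} {M : Finset (Sym2 V)}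
    (h : IsMatching G M) : M.card ≤ matchNum G :=
  le_csSup (my_matchNum_bdd G) ⟨M, h, rfl⟩

lemma my_exists_max_indep [Fintype V] (G : SimpleGraph V) :
    ∃ S : Finset V, (∀ u ∈ S, ∀ v ∈ S, ¬ G.Adj u v) ∧ S.card = indepNum G := by
  have hne : {n | ∃ S : Finset V, (∀ u ∈ S, ∀ v ∈ S, ¬ G.Adj u v) ∧ S.card = n}.Nonempty :=
    ⟨0, ∅, by simp, Finset.card_empty⟩
  have hbdd : BddAbove {n | ∃ S : Finset V, (∀ u ∈ S, ∀ v ∈ S, ¬ G.Adj u v) ∧ S.card = n} :=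
    ⟨Fintype.card V, by rintro n ⟨S, -, rfl⟩; exact S.card_le_univ⟩
  exact Nat.sSup_mem hne hbdd

/-- The saturated-vertex set of a matching, with its cardinality. -/
lemma my_matching_saturated_card [Fintype V] {G : SimpleGraph V} {M : Finset (Sym2 V)}
    (h : IsMatching G M) :
    ∃ W : Finset V, W.card = 2 * M.card ∧ ∀ v, (v ∈ W ↔ Saturates M v) := by
  classical
  refine ⟨M.biUnion (fun e => Finset.univ.filter (· ∈ e)), ?_, ?_⟩
  · rw [Finset.card_biUnion]
    · rw [Finset.sum_congr rfl (g := fun _ => 2), Finset.sum_const, smul_eq_mul, mul_comm]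
      intro e he
      have hne : ¬ e.IsDiag := G.not_isDiag_of_mem_edgeSet (h.1 e he)
      induction e using Sym2.ind with
      | _ a b =>
        have hab : a ≠ b := by simpa using hne
        have : Finset.univ.filter (· ∈ s(a, b)) = {a, b} := by
          ext v; simp [Sym2.mem_iff]
        rw [this, Finset.card_pair hab]
    · intro e he f hf hef
      rw [Function.onFun, Finset.disjoint_left]
      intro v hv hv'
      simp only [Finset.mem_filter, Finset.mem_univ, true_and] at hv hv'
      exact h.2 e he f hf hef v ⟨hv, hv'⟩
  · intro v
    simp only [Finset.mem_biUnion, Finset.mem_filter, Finset.mem_univ, true_and]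
    exact ⟨fun ⟨e, he, hv⟩ => ⟨e, he, hv⟩, fun ⟨e, he, hv⟩ => ⟨e, he, hv⟩⟩

lemma my_two_mul_matchNum_le [Fintype V] (G : SimpleGraph V) :
    2 * matchNum G ≤ Fintype.card V := by
  obtain ⟨M, hM, hc⟩ := my_exists_max_matching G
  obtain ⟨W, hW, -⟩ := my_matching_saturated_card hM
  rw [← hc, ← hW]
  exact W.card_le_univ

end MyHelpers

section HallPart
variable {V : Type} [Fintype V] {G : SimpleGraph V}

noncomputable def nbrF (H : G.Subgraph) (v : V) : Finset V :=
  (Set.toFinite (H.neighborSet v)).toFinset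

lemma mem_nbrF {H : G.Subgraph} {v b : V} : b ∈ nbrF H v ↔ H.Adj v b :=
  Set.Finite.mem_toFinset _

lemma card_nbrF {H : G.Subgraph} (v : V) : (nbrF H v).card = subNdeg H v :=
  (Set.ncard_eq_toFinset_card _ _).symm

lemma hall_deg_aux [DecidableEq V] {H : G.Subgraph}
    (hdeg : ∀ ⦃u v⦄, H.Adj u v → subNdeg H u = subNdeg H v)
    {d : ℕ} (hd : d ≠ 0) (A : Finset V) (hA : ∀ a ∈ A, subNdeg H a = d) :
    A.card ≤ (A.biUnion (nbrF H)).card := by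
  classical
  set B := A.biUnion (nbrF H) with hB
  have hsub : ∀ a ∈ A, nbrF H a = B.filter (fun b => H.Adj a b) := by
    intro a ha
    ext b
    simp only [Finset.mem_filter, mem_nbrF]
    exact ⟨fun hb => ⟨Finset.mem_biUnion.2 ⟨a, ha, mem_nbrF.2 hb⟩, hb⟩, fun hb => hb.2⟩
  have hBdeg : ∀ b ∈ B, subNdeg H b = d := by
    intro b hb
    obtain ⟨a, ha, hab⟩ := Finset.mem_biUnion.1 hb
    rw [← hdeg (mem_nbrF.1 hab)]
    exact hA a ha
  have key : d * A.card ≤ d * B.card := by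
    calc d * A.card = ∑ _a ∈ A, d := by rw [Finset.sum_const, smul_eq_mul, mul_comm]
    _ = ∑ a ∈ A, (nbrF H a).card :=
        Finset.sum_congr rfl (fun a ha => by rw [card_nbrF, hA a ha])
    _ = ∑ a ∈ A, (B.filter (fun b => H.Adj a b)).card :=
        Finset.sum_congr rfl (fun a ha => by rw [hsub a ha])
    _ = ∑ a ∈ A, ∑ b ∈ B, if H.Adj a b then 1 else 0 :=
        Finset.sum_congr rfl (fun a _ => Finset.card_filter _ _)
    _ = ∑ b ∈ B, ∑ a ∈ A, if H.Adj a b then 1 else 0 := Finset.sum_comm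
    _ = ∑ b ∈ B, (A.filter (fun a => H.Adj a b)).card :=
        Finset.sum_congr rfl (fun b _ => (Finset.card_filter _ _).symm)
    _ ≤ ∑ b ∈ B, d := by
        refine Finset.sum_le_sum (fun b hb => ?_)
        have h1 : A.filter (fun a => H.Adj a b) ⊆ nbrF H b := fun a ha =>
          mem_nbrF.2 ((Finset.mem_filter.1 ha).2.symm)
        calc (A.filter (fun a => H.Adj a b)).card ≤ (nbrF H b).card :=
              Finset.card_le_card h1
        _ = d := by rw [card_nbrF]; exact hBdeg b hb
    _ = d * B.card := by rw [Finset.sum_const, smul_eq_mul, mul_comm]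
  exact Nat.le_of_mul_le_mul_left key (Nat.pos_of_ne_zero hd)

lemma hall_cond [DecidableEq V] {H : G.Subgraph}
    (hd12 : ∀ v : V, subNdeg H v = 1 ∨ subNdeg H v = 2)
    (hdeg : ∀ ⦃u v⦄, H.Adj u v → subNdeg H u = subNdeg H v)
    (A : Finset V) :
    A.card ≤ (A.biUnion (nbrF H)).card := by
  classical
  set A₁ := A.filter (fun a => subNdeg H a = 1) with hA₁
  set A₂ := A.filter (fun a => subNdeg H a = 2) with hA₂
  have hsplit : A = A₁ ∪ A₂ := by
    ext a
    simp only [hA₁, hA₂, Finset.mem_union, Finset.mem_filter]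
    constructor
    · intro ha; rcases hd12 a with h | h
      · exact Or.inl ⟨ha, h⟩
      · exact Or.inr ⟨ha, h⟩
    · rintro (⟨ha, -⟩ | ⟨ha, -⟩) <;> exact ha
  have hdisj : Disjoint A₁ A₂ := by
    rw [Finset.disjoint_left]
    rintro a h1 h2
    simp only [hA₁, hA₂, Finset.mem_filter] at h1 h2
    omega
  have h1 := hall_deg_aux hdeg (d := 1) one_ne_zero A₁
    (fun a ha => (Finset.mem_filter.1 ha).2)
  have h2 := hall_deg_aux hdeg (d := 2) two_ne_zero A₂
    (fun a ha => (Finset.mem_filter.1 ha).2)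
  have hBdisj : Disjoint (A₁.biUnion (nbrF H)) (A₂.biUnion (nbrF H)) := by
    rw [Finset.disjoint_left]
    intro b hb1 hb2
    obtain ⟨a1, ha1, hab1⟩ := Finset.mem_biUnion.1 hb1
    obtain ⟨a2, ha2, hab2⟩ := Finset.mem_biUnion.1 hb2
    have e1 : subNdeg H b = 1 := by
      rw [← hdeg (mem_nbrF.1 hab1)]; exact (Finset.mem_filter.1 ha1).2
    have e2 : subNdeg H b = 2 := by
      rw [← hdeg (mem_nbrF.1 hab2)]; exact (Finset.mem_filter.1 ha2).2
    omega
  have hBsub : A₁.biUnion (nbrF H) ∪ A₂.biUnion (nbrF H) ⊆ A.biUnion (nbrF H) := by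
    intro b hb
    rcases Finset.mem_union.1 hb with hb | hb <;>
      [obtain ⟨a, ha, hab⟩ := Finset.mem_biUnion.1 hb;
       obtain ⟨a, ha, hab⟩ := Finset.mem_biUnion.1 hb] <;>
      exact Finset.mem_biUnion.2 ⟨a, Finset.mem_of_mem_filter a ha, hab⟩
  calc A.card = A₁.card + A₂.card := by
        rw [hsplit, Finset.card_union_of_disjoint hdisj]
  _ ≤ (A₁.biUnion (nbrF H)).card + (A₂.biUnion (nbrF H)).card := Nat.add_le_add h1 h2
  _ = (A₁.biUnion (nbrF H) ∪ A₂.biUnion (nbrF H)).card :=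
        (Finset.card_union_of_disjoint hBdisj).symm
  _ ≤ (A.biUnion (nbrF H)).card := Finset.card_le_card hBsub

lemma my_indep_le_match (H : G.Subgraph)
    (hH : SubComponentsAreEdgesOrCycles H) (hverts : H.verts = Set.univ) :
    indepNum G ≤ matchNum G := by
  classical
  obtain ⟨S, hSind, hScard⟩ := my_exists_max_indep G
  have hd12 : ∀ v : V, subNdeg H v = 1 ∨ subNdeg H v = 2 := fun v =>
    hH.1 v (hverts ▸ Set.mem_univ v)
  have hall : ∀ A : Finset {x // x ∈ S},
      A.card ≤ (A.biUnion (fun x => nbrF H x.1)).card := by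
    intro A
    have himg : A.biUnion (fun x => nbrF H x.1) = (A.image Subtype.val).biUnion (nbrF H) := by
      rw [Finset.image_biUnion]
    rw [himg, ← Finset.card_image_of_injective A Subtype.val_injective]
    exact hall_cond hd12 hH.2 _
  obtain ⟨f, hfinj, hf⟩ := (Finset.all_card_le_biUnion_card_iff_existsInjective'
      (fun x : {x // x ∈ S} => nbrF H x.1)).1 hall
  have hadj : ∀ x : {x // x ∈ S}, H.Adj x.1 (f x) := fun x => mem_nbrF.1 (hf x)
  have hfn : ∀ x : {x // x ∈ S}, f x ∉ S := fun x hx =>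
    hSind x.1 x.2 (f x) hx (H.adj_sub (hadj x))
  set M : Finset (Sym2 V) := S.attach.image (fun x => s(x.1, f x)) with hM
  have hmatch : IsMatching G M := by
    constructor
    · rintro e he
      simp only [hM, Finset.mem_image, Finset.mem_attach, true_and] at he
      obtain ⟨x, rfl⟩ := he
      exact G.mem_edgeSet.2 (H.adj_sub (hadj x))
    · rintro e he g hg hne v ⟨hv1, hv2⟩
      simp only [hM, Finset.mem_image, Finset.mem_attach, true_and] at he hg
      obtain ⟨x, rfl⟩ := he
      obtain ⟨y, rfl⟩ := hg
      rw [Sym2.mem_iff] at hv1 hv2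
      rcases hv1 with rfl | rfl <;> rcases hv2 with h | h
      · exact hne (by rw [Subtype.ext h])
      · exact hfn y (h ▸ x.2)
      · exact hfn x (h ▸ y.2)
      · exact hne (by rw [hfinj h])
  have hcard : M.card = S.card := by
    rw [hM, Finset.card_image_of_injOn, Finset.card_attach]
    intro x _ y _ hxy
    rw [Sym2.eq_iff] at hxy
    rcases hxy with ⟨h1, _⟩ | ⟨h1, _⟩
    · exact Subtype.ext h1
    · exact absurd (h1 ▸ x.2) (hfn y)
  calc indepNum G = S.card := hScard.symm
  _ = M.card := hcard.symm
  _ ≤ matchNum G := my_card_le_matchNum hmatch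

end HallPart

section MainPart
variable {V : Type} [Fintype V] {G : SimpleGraph V}

lemma my_prk_bdd (G : SimpleGraph V) :
    BddAbove {n | ∃ H : G.Subgraph, SubComponentsAreEdgesOrCycles H ∧ H.verts.ncard = n} := by
  refine ⟨Fintype.card V, ?_⟩
  rintro n ⟨H, -, rfl⟩
  have := Set.ncard_le_ncard (Set.subset_univ H.verts) Set.finite_univ
  rwa [Set.ncard_univ, Nat.card_eq_fintype_card] at this

lemma my_scaeoc_bot : SubComponentsAreEdgesOrCycles (⊥ : G.Subgraph) := by
  constructor
  · intro v hv
    simp only [SimpleGraph.Subgraph.verts_bot] at hv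
    exact absurd hv (Set.notMem_empty v)
  · intro u v h
    simp at h

lemma my_msub_deg {M : Finset (Sym2 V)} (hPM : IsPerfectMatching G M) (v : V) :
    subNdeg (matchingSubgraph G M hPM.1.1) v = 1 := by
  obtain ⟨e, he, hv⟩ := hPM.2 v
  obtain ⟨u, rfl⟩ := Sym2.mem_iff_exists.1 hv
  have hset : (matchingSubgraph G M hPM.1.1).neighborSet v = {u} := by
    ext w
    simp only [SimpleGraph.Subgraph.mem_neighborSet, Set.mem_singleton_iff]
    constructor
    · intro hw
      by_contra hne
      have hne' : s(v, w) ≠ s(v, u) := fun h => hne (Sym2.congr_right.1 h)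
      exact hPM.1.2 _ hw _ he hne' v ⟨Sym2.mem_mk_left _ _, Sym2.mem_mk_left _ _⟩
    · rintro rfl; exact he
  rw [subNdeg, hset, Set.ncard_singleton]

theorem stmt16' (G : SimpleGraph V) (hKE : IsKonigEgervary G) :
    (∃ M : Finset (Sym2 V), IsPerfectMatching G M) ↔
      ((∀ H : G.Subgraph, SubComponentsAreEdgesOrCycles H →
          (∀ H' : G.Subgraph, SubComponentsAreEdgesOrCycles H' →
            H'.verts.ncard ≤ H.verts.ncard) →
          H.verts = Set.univ) ∧
        prk G = Fintype.card V) := by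
  classical
  constructor
  · rintro ⟨M, hPM⟩
    set H := matchingSubgraph G M hPM.1.1 with hHdef
    have hdeg : ∀ v, subNdeg H v = 1 := my_msub_deg hPM
    have hsc : SubComponentsAreEdgesOrCycles H :=
      ⟨fun v _ => Or.inl (hdeg v), fun u v _ => by rw [hdeg u, hdeg v]⟩
    have hverts : H.verts = Set.univ := by
      ext v
      simp only [Set.mem_univ, iff_true]
      exact hPM.2 v
    have hncard : H.verts.ncard = Fintype.card V := by
      rw [hverts, Set.ncard_univ, Nat.card_eq_fintype_card]
    constructor
    · intro H' hH' hmax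
      have hcard1 : Fintype.card V ≤ H'.verts.ncard := by
        rw [← hncard]; exact hmax H hsc
      refine Set.eq_of_subset_of_ncard_le (Set.subset_univ _) ?_ Set.finite_univ
      rwa [Set.ncard_univ, Nat.card_eq_fintype_card]
    · refine le_antisymm ?_ ?_
      · refine csSup_le ⟨_, H, hsc, rfl⟩ ?_
        rintro n ⟨H', -, rfl⟩
        have := Set.ncard_le_ncard (Set.subset_univ H'.verts) Set.finite_univ
        rwa [Set.ncard_univ, Nat.card_eq_fintype_card] at this
      · exact le_csSup (my_prk_bdd G) ⟨H, hsc, hncard⟩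
  · rintro ⟨h1, -⟩
    have hne : {n | ∃ H : G.Subgraph,
        SubComponentsAreEdgesOrCycles H ∧ H.verts.ncard = n}.Nonempty :=
      ⟨0, ⊥, my_scaeoc_bot, by simp [SimpleGraph.Subgraph.verts_bot]⟩
    obtain ⟨H₀, hH₀, hc₀⟩ := Nat.sSup_mem hne (my_prk_bdd G)
    have hmax : ∀ H' : G.Subgraph, SubComponentsAreEdgesOrCycles H' →
        H'.verts.ncard ≤ H₀.verts.ncard := by
      intro H' hH'
      rw [hc₀]
      exact le_csSup (my_prk_bdd G) ⟨H', hH', rfl⟩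
    have hverts := h1 H₀ hH₀ hmax
    have hle := my_indep_le_match H₀ hH₀ hverts
    have h2μ := my_two_mul_matchNum_le G
    have hKE' : indepNum G + matchNum G = Fintype.card V := hKE
    have heq : 2 * matchNum G = Fintype.card V := by omega
    obtain ⟨M, hM, hMc⟩ := my_exists_max_matching G
    obtain ⟨W, hWc, hWiff⟩ := my_matching_saturated_card hM
    have hWu : W = Finset.univ := Finset.eq_univ_of_card _ (by rw [hWc, hMc, heq])
    exact ⟨M, hM, fun v => (hWiff v).1 (hWu ▸ Finset.mem_univ v)⟩

end MainPart


/-- A König–Egerváry graph `G` has a perfect matching iff every subgraph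
of `G` of maximum order among the subgraphs whose components are single edges or cycles is
a spanning subgraph of `G`; equivalently, iff `prk(G) = |V(G)|`. -/
theorem stmt16 {V : Type} [Fintype V] (G : SimpleGraph V) (hKE : IsKonigEgervary G) :
    (∃ M : Finset (Sym2 V), IsPerfectMatching G M) ↔
      ((∀ H : G.Subgraph, SubComponentsAreEdgesOrCycles H →
          (∀ H' : G.Subgraph, SubComponentsAreEdgesOrCycles H' →
            H'.verts.ncard ≤ H.verts.ncard) →
          H.verts = Set.univ) ∧
        prk G = Fintype.card V) := by
  exact stmt16' G hKE
end
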